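/- Let φ : ℙ¹(ℂ) → ℙ¹(ℂ) be a rational map of degree d ≥ 2 and Δ ≥ 1 an integer. Then there exists a point α ∈ ℙ¹(ℂ) such that φ^(Δ)(φ(α)) = φ(α) but φ^(Δ)(α) ≠ α. -/

import Mathlib

open Polynomial OnePoint

/-- Evaluation of the rational map f/g (f, g coprime) on ℙ¹(ℂ) = ℂ ∪ {∞}. -/
noncomputable def ratEval (f g : Polynomial ℂ) : OnePoint ℂ → OnePoint ℂ :=
  fun x =>
    match x with
    | OnePoint.infty =>
        if f.degree ≤ g.degree then
          if g.degree ≤ f.degree then ((f.leadingCoeff / g.leadingCoeff : ℂ) : OnePoint ℂ)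
          else ((0 : ℂ) : OnePoint ℂ)
        else OnePoint.infty
    | (a : ℂ) =>
        if g.eval a = 0 then OnePoint.infty
        else ((f.eval a / g.eval a : ℂ) : OnePoint ℂ)

lemma ratEval_coe (A B : Polynomial ℂ) (a : ℂ) :
    ratEval A B (a : OnePoint ℂ)
      = if B.eval a = 0 then ∞ else ((A.eval a / B.eval a : ℂ) : OnePoint ℂ) := rfl

lemma ratEval_infty (A B : Polynomial ℂ) :
    ratEval A B ∞
      = if A.degree ≤ B.degree then
          if B.degree ≤ A.degree then ((A.leadingCoeff / B.leadingCoeff : ℂ) : OnePoint ℂ)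
          else ((0 : ℂ) : OnePoint ℂ)
        else ∞ := rfl

lemma degle {A B : Polynomial ℂ} (hA : A ≠ 0) (hB : B ≠ 0) :
    A.degree ≤ B.degree ↔ A.natDegree ≤ B.natDegree := by
  rw [degree_eq_natDegree hA, degree_eq_natDegree hB, Nat.cast_le]

lemma nu_lt (dp dq d i j : ℕ) (h : dp < dq) (hij : j < i) (hid : i ≤ d) :
    i * dp + (d - i) * dq < j * dp + (d - j) * dq := by
  have h1 : i * dp = j * dp + (i - j) * dp := by rw [← add_mul]; congr 1; omega
  have h2 : (d - j) * dq = (d - i) * dq + (i - j) * dq := by rw [← add_mul]; congr 1; omega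
  have h3 : (i - j) * dp < (i - j) * dq :=
    mul_lt_mul_of_pos_left h (by omega)
  linarith

lemma nu_gt (dp dq d i j : ℕ) (h : dq < dp) (hij : i < j) (hjd : j ≤ d) :
    i * dp + (d - i) * dq < j * dp + (d - j) * dq := by
  have h1 : j * dp = i * dp + (j - i) * dp := by rw [← add_mul]; congr 1; omega
  have h2 : (d - i) * dq = (d - j) * dq + (j - i) * dq := by rw [← add_mul]; congr 1; omega
  have h3 : (j - i) * dq < (j - i) * dp :=
    mul_lt_mul_of_pos_left h (by omega)
  linarith

lemma nu_le (dp dq d i : ℕ) (h : dp ≤ dq) (hid : i ≤ d) :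
    i * dp + (d - i) * dq ≤ d * dq := by
  have h1 : i * dp ≤ i * dq := Nat.mul_le_mul_left i h
  have h2 : i * dq + (d - i) * dq = d * dq := by rw [← add_mul]; congr 1; omega
  linarith

noncomputable def homPoly (h p q : Polynomial ℂ) (d : ℕ) : Polynomial ℂ :=
  ∑ i ∈ Finset.range (d + 1), C (h.coeff i) * p ^ i * q ^ (d - i)

lemma sum_pow_eval (h : Polynomial ℂ) (d : ℕ) (hd : h.natDegree ≤ d) (u v : ℂ) (hv : v ≠ 0) :
    ∑ i ∈ Finset.range (d + 1), h.coeff i * u ^ i * v ^ (d - i) = v ^ d * h.eval (u / v) := by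
  rw [eval_eq_sum_range' (Nat.lt_succ_of_le hd), Finset.mul_sum]
  refine Finset.sum_congr rfl fun i hi => ?_
  have hid : i ≤ d := Nat.lt_succ_iff.mp (Finset.mem_range.mp hi)
  have hvd : v ^ d = v ^ i * v ^ (d - i) := by rw [← pow_add]; congr 1; omega
  rw [div_pow, hvd]
  field_simp

lemma homPoly_eval_ne (h p q : Polynomial ℂ) (d : ℕ) (hd : h.natDegree ≤ d) (a : ℂ)
    (hqa : q.eval a ≠ 0) :
    (homPoly h p q d).eval a = q.eval a ^ d * h.eval (p.eval a / q.eval a) := by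
  rw [homPoly, eval_finset_sum]
  simp only [eval_mul, eval_pow, eval_C]
  exact sum_pow_eval h d hd (p.eval a) (q.eval a) hqa

lemma homPoly_eval_zero (h p q : Polynomial ℂ) (d : ℕ) (a : ℂ) (hqa : q.eval a = 0) :
    (homPoly h p q d).eval a = h.coeff d * p.eval a ^ d := by
  rw [homPoly, eval_finset_sum]
  rw [Finset.sum_eq_single d]
  · simp
  · intro i hi hne
    have hid : i ≤ d := Nat.lt_succ_iff.mp (Finset.mem_range.mp hi)
    have h0 : d - i ≠ 0 := by omega
    simp [eval_mul, eval_pow, hqa, zero_pow h0]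
  · intro hd; simp at hd

lemma homPoly_natDegree_le (h p q : Polynomial ℂ) (d B : ℕ)
    (hB : ∀ i, i ≤ d → h.coeff i ≠ 0 → i * p.natDegree + (d - i) * q.natDegree ≤ B) :
    (homPoly h p q d).natDegree ≤ B := by
  refine natDegree_sum_le_of_forall_le _ _ fun i hi => ?_
  have hid : i ≤ d := Nat.lt_succ_iff.mp (Finset.mem_range.mp hi)
  by_cases hc : h.coeff i = 0
  · simp [hc]
  · calc (C (h.coeff i) * p ^ i * q ^ (d - i)).natDegree
        ≤ (C (h.coeff i) * p ^ i).natDegree + (q ^ (d - i)).natDegree := natDegree_mul_le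
      _ ≤ p.natDegree ^ 0 * 0 + (i * p.natDegree + (d - i) * q.natDegree) := by
          have h1 : (C (h.coeff i) * p ^ i).natDegree ≤ (p ^ i).natDegree :=
            natDegree_C_mul_le _ _
          have h2 : (p ^ i).natDegree ≤ i * p.natDegree := natDegree_pow_le.trans (le_refl _)
          have h3 : (q ^ (d - i)).natDegree ≤ (d - i) * q.natDegree := natDegree_pow_le
          simp only [pow_zero, one_mul, zero_add]
          omega
      _ ≤ B := by simpa using hB i hid hc

lemma homPoly_coeff_spec (h p q : Polynomial ℂ) (d j : ℕ) (hp : p ≠ 0) (hq : q ≠ 0)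
    (hj : j ≤ d) (hjc : h.coeff j ≠ 0)
    (hlt : ∀ i, i ≤ d → h.coeff i ≠ 0 → i ≠ j →
      i * p.natDegree + (d - i) * q.natDegree < j * p.natDegree + (d - j) * q.natDegree) :
    (homPoly h p q d).natDegree = j * p.natDegree + (d - j) * q.natDegree ∧
    (homPoly h p q d).leadingCoeff
      = h.coeff j * p.leadingCoeff ^ j * q.leadingCoeff ^ (d - j) := by
  have hub : (homPoly h p q d).natDegree ≤ j * p.natDegree + (d - j) * q.natDegree := by
    refine homPoly_natDegree_le h p q d _ fun i hid hc => ?_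
    by_cases hij : i = j
    · subst hij; exact le_refl _
    · exact (hlt i hid hc hij).le
  have hterm : ∀ i, (p ^ i * q ^ (d - i)).natDegree
      = i * p.natDegree + (d - i) * q.natDegree := by
    intro i
    rw [natDegree_mul (pow_ne_zero _ hp) (pow_ne_zero _ hq), natDegree_pow, natDegree_pow]
  have hcoeff : (homPoly h p q d).coeff (j * p.natDegree + (d - j) * q.natDegree)
      = h.coeff j * (p.leadingCoeff ^ j * q.leadingCoeff ^ (d - j)) := by
    rw [homPoly, finset_sum_coeff]
    rw [Finset.sum_eq_single j]
    · have : (p ^ j * q ^ (d - j)).coeff (j * p.natDegree + (d - j) * q.natDegree)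
          = p.leadingCoeff ^ j * q.leadingCoeff ^ (d - j) := by
        rw [← hterm j, coeff_natDegree, leadingCoeff_mul, leadingCoeff_pow, leadingCoeff_pow]
      rw [mul_assoc, coeff_C_mul, this]
    · intro i hi hne
      have hid : i ≤ d := Nat.lt_succ_iff.mp (Finset.mem_range.mp hi)
      by_cases hc : h.coeff i = 0
      · simp [hc]
      · have hz : (p ^ i * q ^ (d - i)).coeff (j * p.natDegree + (d - j) * q.natDegree) = 0 :=
          coeff_eq_zero_of_natDegree_lt (by rw [hterm i]; exact hlt i hid hc hne)
        rw [mul_assoc, coeff_C_mul, hz, mul_zero]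
    · intro hd; exact absurd (Finset.mem_range.mpr (Nat.lt_succ_of_le hj)) hd
  have hne : (homPoly h p q d).coeff (j * p.natDegree + (d - j) * q.natDegree) ≠ 0 := by
    rw [hcoeff]
    exact mul_ne_zero hjc (mul_ne_zero (pow_ne_zero _ (leadingCoeff_ne_zero.mpr hp))
      (pow_ne_zero _ (leadingCoeff_ne_zero.mpr hq)))
  have hdeg : (homPoly h p q d).natDegree = j * p.natDegree + (d - j) * q.natDegree :=
    le_antisymm hub (le_natDegree_of_ne_zero hne)
  refine ⟨hdeg, ?_⟩
  rw [leadingCoeff, hdeg, hcoeff, mul_assoc]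

lemma homPoly_coeff_top (h p q : Polynomial ℂ) (d : ℕ) (hp : p ≠ 0) (hq : q ≠ 0)
    (hd : h.natDegree ≤ d) (he : p.natDegree = q.natDegree) :
    (homPoly h p q d).natDegree ≤ d * q.natDegree ∧
    (homPoly h p q d).coeff (d * q.natDegree)
      = q.leadingCoeff ^ d * h.eval (p.leadingCoeff / q.leadingCoeff) := by
  have hterm : ∀ i, i ≤ d → (p ^ i * q ^ (d - i)).natDegree = d * q.natDegree := by
    intro i hid
    rw [natDegree_mul (pow_ne_zero _ hp) (pow_ne_zero _ hq), natDegree_pow, natDegree_pow, he]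
    rw [← add_mul]
    congr 1
    omega
  constructor
  · refine homPoly_natDegree_le h p q d _ fun i hid hc => ?_
    rw [he, ← add_mul]
    have : i + (d - i) = d := by omega
    rw [this]
  · rw [homPoly, finset_sum_coeff]
    have : ∀ i ∈ Finset.range (d + 1),
        (C (h.coeff i) * p ^ i * q ^ (d - i)).coeff (d * q.natDegree)
        = h.coeff i * p.leadingCoeff ^ i * q.leadingCoeff ^ (d - i) := by
      intro i hi
      have hid : i ≤ d := Nat.lt_succ_iff.mp (Finset.mem_range.mp hi)
      rw [mul_assoc, coeff_C_mul, ← hterm i hid]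
      rw [mul_assoc]
      congr 1
      rw [← leadingCoeff_pow, ← leadingCoeff_pow, ← leadingCoeff_mul]
      rfl
    rw [Finset.sum_congr rfl this]
    exact sum_pow_eval h d hd p.leadingCoeff q.leadingCoeff (leadingCoeff_ne_zero.mpr hq)

lemma coprime_eval_ne (f g : Polynomial ℂ) (hfg : IsCoprime f g) (a : ℂ)
    (hf : f.eval a = 0) : g.eval a ≠ 0 := by
  obtain ⟨u, v, huv⟩ := hfg
  intro hg
  have := congrArg (Polynomial.eval a) huv
  simp [hf, hg] at this

lemma ne_zero_of_coprime_maxdeg {f g : Polynomial ℂ} (hfg : IsCoprime f g)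
    (h : 1 ≤ max f.natDegree g.natDegree) : f ≠ 0 ∧ g ≠ 0 := by
  constructor
  · rintro rfl
    rw [isCoprime_zero_left] at hfg
    have h2 := natDegree_eq_zero_of_isUnit hfg
    simp [h2] at h
  · rintro rfl
    rw [isCoprime_zero_right] at hfg
    have h2 := natDegree_eq_zero_of_isUnit hfg
    simp [h2] at h

lemma isCoprime_of_no_common_root {F G : Polynomial ℂ} (hF : F ≠ 0)
    (h : ∀ a : ℂ, F.eval a = 0 → G.eval a ≠ 0) : IsCoprime F G := by
  classical
  rw [← EuclideanDomain.gcd_isUnit_iff]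
  by_contra hu
  have hg0 : EuclideanDomain.gcd F G ≠ 0 := by
    intro h0
    exact hF (EuclideanDomain.gcd_eq_zero_iff.mp h0).1
  have hdeg : (EuclideanDomain.gcd F G).degree ≠ 0 := by
    intro hd
    exact hu (isUnit_iff_degree_eq_zero.mpr hd)
  obtain ⟨a, ha⟩ := IsAlgClosed.exists_root (EuclideanDomain.gcd F G) hdeg
  have hdF : (EuclideanDomain.gcd F G) ∣ F := EuclideanDomain.gcd_dvd_left F G
  have hdG : (EuclideanDomain.gcd F G) ∣ G := EuclideanDomain.gcd_dvd_right F G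
  obtain ⟨k, hk⟩ := hdF
  obtain ⟨l, hl⟩ := hdG
  have hFa : F.eval a = 0 := by rw [hk, eval_mul, ha.eq_zero, zero_mul]
  have hGa : G.eval a = 0 := by rw [hl, eval_mul, ha.eq_zero, zero_mul]
  exact h a hFa hGa


lemma eq_pow_of_roots_subset {P : Polynomial ℂ} (a : ℂ) (h0 : P ≠ 0)
    (h : ∀ x : ℂ, P.IsRoot x → x = a) :
    P = C P.leadingCoeff * (X - C a) ^ P.natDegree := by
  have hcard : P.roots.card = P.natDegree := IsAlgClosed.card_roots_eq_natDegree
  have hrep : P.roots = Multiset.replicate P.natDegree a := by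
    rw [Multiset.eq_replicate]
    refine ⟨hcard, fun b hb => h b (isRoot_of_mem_roots hb)⟩
  have := (C_leadingCoeff_mul_prod_multiset_X_sub_C hcard).symm
  rw [hrep] at this
  simpa [Multiset.map_replicate, Multiset.prod_replicate] using this

theorem comp_spec (f g p q : Polynomial ℂ) (hfg : IsCoprime f g) (hpq : IsCoprime p q)
    (hd2 : 2 ≤ max f.natDegree g.natDegree) (he1 : 1 ≤ max p.natDegree q.natDegree) :
    ∃ F G : Polynomial ℂ, IsCoprime F G ∧
      max F.natDegree G.natDegree = max f.natDegree g.natDegree * max p.natDegree q.natDegree ∧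
      ∀ x, ratEval F G x = ratEval f g (ratEval p q x) := by
  obtain ⟨hf0, hg0⟩ := ne_zero_of_coprime_maxdeg hfg (by omega)
  obtain ⟨hp0, hq0⟩ := ne_zero_of_coprime_maxdeg hpq he1
  set d := max f.natDegree g.natDegree with hddef
  set F := homPoly f p q d with hFdef
  set G := homPoly g p q d with hGdef
  have hfd : f.natDegree ≤ d := le_max_left _ _
  have hgd : g.natDegree ≤ d := le_max_right _ _
  have hlcp : p.leadingCoeff ≠ 0 := leadingCoeff_ne_zero.mpr hp0
  have hlcq : q.leadingCoeff ≠ 0 := leadingCoeff_ne_zero.mpr hq0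
  have hlcf : f.leadingCoeff ≠ 0 := leadingCoeff_ne_zero.mpr hf0
  have hlcg : g.leadingCoeff ≠ 0 := leadingCoeff_ne_zero.mpr hg0
  -- the top coefficient (index d) of f or g is nonzero
  have htop : f.coeff d ≠ 0 ∨ g.coeff d ≠ 0 := by
    rcases max_choice f.natDegree g.natDegree with h | h
    · left; rw [hddef, h]; exact hlcf
    · right; rw [hddef, h]; exact hlcg
  -- no common roots
  have hno : ∀ a : ℂ, F.eval a = 0 → G.eval a ≠ 0 := by
    intro a hFa hGa
    by_cases hqa : q.eval a = 0
    · have hpa : p.eval a ≠ 0 := coprime_eval_ne q p hpq.symm a hqa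
      rw [hFdef, homPoly_eval_zero f p q d a hqa] at hFa
      rw [hGdef, homPoly_eval_zero g p q d a hqa] at hGa
      have hfd0 : f.coeff d = 0 := by
        rcases mul_eq_zero.mp hFa with h | h
        · exact h
        · exact absurd h (pow_ne_zero _ hpa)
      have hgd0 : g.coeff d = 0 := by
        rcases mul_eq_zero.mp hGa with h | h
        · exact h
        · exact absurd h (pow_ne_zero _ hpa)
      rcases htop with h | h <;> [exact h hfd0; exact h hgd0]
    · rw [hFdef, homPoly_eval_ne f p q d hfd a hqa] at hFa
      rw [hGdef, homPoly_eval_ne g p q d hgd a hqa] at hGa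
      have hq' : q.eval a ^ d ≠ 0 := pow_ne_zero _ hqa
      have hf' : f.eval (p.eval a / q.eval a) = 0 := by
        rcases mul_eq_zero.mp hFa with h | h
        · exact absurd h hq'
        · exact h
      have hg' : g.eval (p.eval a / q.eval a) = 0 := by
        rcases mul_eq_zero.mp hGa with h | h
        · exact absurd h hq'
        · exact h
      exact coprime_eval_ne f g hfg _ hf' hg'
  -- pointwise at finite points
  have hfin : ∀ a : ℂ, ratEval F G (a : OnePoint ℂ) = ratEval f g (ratEval p q (a : OnePoint ℂ)) := by
    intro a
    by_cases hqa : q.eval a = 0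
    · have hpa : p.eval a ≠ 0 := coprime_eval_ne q p hpq.symm a hqa
      have hpad : p.eval a ^ d ≠ 0 := pow_ne_zero _ hpa
      rw [ratEval_coe p q, if_pos hqa, ratEval_infty f g, ratEval_coe F G]
      rw [hFdef, hGdef, homPoly_eval_zero f p q d a hqa, homPoly_eval_zero g p q d a hqa]
      rcases lt_trichotomy f.natDegree g.natDegree with hfg' | hfg' | hfg'
      · -- deg f < deg g = d
        have hgdeq : g.natDegree = d := by omega
        have hfc : f.coeff d = 0 := coeff_eq_zero_of_natDegree_lt (by omega)
        have hgc : g.coeff d ≠ 0 := by rw [← hgdeq]; exact hlcg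
        rw [if_pos ((degle hf0 hg0).mpr hfg'.le),
            if_neg (fun hh => absurd ((degle hg0 hf0).mp hh) (by omega)),
            if_neg (mul_ne_zero hgc hpad)]
        rw [hfc, zero_mul, zero_div]
      · -- equal degrees = d
        have hfdeq : f.natDegree = d := by omega
        have hgdeq : g.natDegree = d := by omega
        have hfc : f.coeff d ≠ 0 := by rw [← hfdeq]; exact hlcf
        have hgc : g.coeff d ≠ 0 := by rw [← hgdeq]; exact hlcg
        rw [if_pos ((degle hf0 hg0).mpr (by omega)), if_pos ((degle hg0 hf0).mpr (by omega)),
            if_neg (mul_ne_zero hgc hpad)]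
        rw [mul_div_mul_right _ _ hpad]
        rw [leadingCoeff, leadingCoeff, hfdeq, hgdeq]
      · -- deg g < deg f = d
        have hfdeq : f.natDegree = d := by omega
        have hgc : g.coeff d = 0 := coeff_eq_zero_of_natDegree_lt (by omega)
        rw [if_neg (fun hh => absurd ((degle hf0 hg0).mp hh) (by omega)),
            if_pos (by rw [hgc, zero_mul])]
    · have hqad : q.eval a ^ d ≠ 0 := pow_ne_zero _ hqa
      rw [ratEval_coe p q, if_neg hqa, ratEval_coe f g, ratEval_coe F G]
      rw [hFdef, hGdef, homPoly_eval_ne f p q d hfd a hqa, homPoly_eval_ne g p q d hgd a hqa]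
      by_cases hgt : g.eval (p.eval a / q.eval a) = 0
      · rw [if_pos hgt, if_pos (by rw [hgt, mul_zero])]
      · rw [if_neg hgt, if_neg (mul_ne_zero hqad hgt)]
        rw [mul_div_mul_left _ _ hqad]
  -- now the case analysis at infinity
  have key : max F.natDegree G.natDegree = d * max p.natDegree q.natDegree ∧
      ratEval F G ∞ = ratEval f g (ratEval p q ∞) := by
    rcases lt_trichotomy p.natDegree q.natDegree with hpq' | hpq' | hpq'
    · -- dp < dq : use trailing degrees
      have hemax : max p.natDegree q.natDegree = q.natDegree := max_eq_right hpq'.le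
      have hpsi : ratEval p q ∞ = ((0 : ℂ) : OnePoint ℂ) := by
        rw [ratEval_infty, if_pos ((degle hp0 hq0).mpr hpq'.le),
          if_neg (fun hh => absurd ((degle hq0 hp0).mp hh) (by omega))]
      have hspec : ∀ h : Polynomial ℂ, h ≠ 0 → h.natDegree ≤ d →
          (homPoly h p q d).natDegree
            = h.natTrailingDegree * p.natDegree + (d - h.natTrailingDegree) * q.natDegree ∧
          (homPoly h p q d).leadingCoeff = h.trailingCoeff * p.leadingCoeff ^ h.natTrailingDegree
            * q.leadingCoeff ^ (d - h.natTrailingDegree) := by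
        intro h h0 hhd
        refine homPoly_coeff_spec h p q d h.natTrailingDegree hp0 hq0
          (h.natTrailingDegree_le_natDegree.trans hhd)
          (trailingCoeff_nonzero_iff_nonzero.mpr h0) (fun i hid hc hne => ?_)
        exact nu_lt _ _ _ _ _ hpq'
          (lt_of_le_of_ne (natTrailingDegree_le_of_ne_zero hc) (fun hh => hne hh.symm)) hid
      obtain ⟨hFdeg, hFlc⟩ := hspec f hf0 hfd
      obtain ⟨hGdeg, hGlc⟩ := hspec g hg0 hgd
      rw [← hFdef] at hFdeg hFlc
      rw [← hGdef] at hGdeg hGlc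
      have hF0 : F ≠ 0 := leadingCoeff_ne_zero.mp (by
        rw [hFlc]
        exact mul_ne_zero (mul_ne_zero (trailingCoeff_nonzero_iff_nonzero.mpr hf0)
          (pow_ne_zero _ hlcp)) (pow_ne_zero _ hlcq))
      have hG0 : G ≠ 0 := leadingCoeff_ne_zero.mp (by
        rw [hGlc]
        exact mul_ne_zero (mul_ne_zero (trailingCoeff_nonzero_iff_nonzero.mpr hg0)
          (pow_ne_zero _ hlcp)) (pow_ne_zero _ hlcq))
      rw [hpsi, ratEval_coe f g, ratEval_infty F G]
      rw [← coeff_zero_eq_eval_zero, ← coeff_zero_eq_eval_zero]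
      by_cases hg00 : g.coeff 0 = 0
      · -- g(0) = 0, so f(0) ≠ 0, tf = 0, tg ≥ 1
        have hf00 : f.coeff 0 ≠ 0 := by
          intro hf00
          exact coprime_eval_ne f g hfg 0 (by rw [← coeff_zero_eq_eval_zero]; exact hf00)
            (by rw [← coeff_zero_eq_eval_zero]; exact hg00)
        have htf : f.natTrailingDegree = 0 := Nat.le_zero.mp (natTrailingDegree_le_of_ne_zero hf00)
        have htg : 0 < g.natTrailingDegree := by
          rcases Nat.eq_zero_or_pos g.natTrailingDegree with h | h
          · exfalso
            apply trailingCoeff_nonzero_iff_nonzero.mpr hg0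
            rw [show g.trailingCoeff = g.coeff g.natTrailingDegree from rfl, h]
            exact hg00
          · exact h
        have hFd : F.natDegree = d * q.natDegree := by rw [hFdeg, htf]; simp
        have hGd : G.natDegree < d * q.natDegree := by
          rw [hGdeg, ← hFd, hFdeg, htf]
          simpa using nu_lt p.natDegree q.natDegree d g.natTrailingDegree 0 hpq' htg
            (g.natTrailingDegree_le_natDegree.trans hgd)
        constructor
        · rw [hemax]; omega
        · rw [if_pos hg00, if_neg (fun hh => absurd ((degle hF0 hG0).mp hh) (by omega))]
      · have htg : g.natTrailingDegree = 0 := Nat.le_zero.mp (natTrailingDegree_le_of_ne_zero hg00)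
        have hGd : G.natDegree = d * q.natDegree := by rw [hGdeg, htg]; simp
        have hFle : F.natDegree ≤ d * q.natDegree := by
          rw [hFdeg]
          exact nu_le _ _ _ _ hpq'.le (f.natTrailingDegree_le_natDegree.trans hfd)
        have hmax : max F.natDegree G.natDegree = d * max p.natDegree q.natDegree := by
          rw [hemax]; omega
        refine ⟨hmax, ?_⟩
        rw [if_neg hg00, if_pos ((degle hF0 hG0).mpr (by omega))]
        by_cases hf00 : f.coeff 0 = 0
        · have htf : 0 < f.natTrailingDegree := by
            rcases Nat.eq_zero_or_pos f.natTrailingDegree with h | h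
            · exfalso
              apply trailingCoeff_nonzero_iff_nonzero.mpr hf0
              rw [show f.trailingCoeff = f.coeff f.natTrailingDegree from rfl, h]
              exact hf00
            · exact h
          have hFlt : F.natDegree < d * q.natDegree := by
            rw [hFdeg, ← hGd, hGdeg, htg]
            simpa using nu_lt p.natDegree q.natDegree d f.natTrailingDegree 0 hpq' htf
              (f.natTrailingDegree_le_natDegree.trans hfd)
          rw [if_neg (fun hh => absurd ((degle hG0 hF0).mp hh) (by omega))]
          rw [hf00, zero_div]
        · have htf : f.natTrailingDegree = 0 := Nat.le_zero.mp (natTrailingDegree_le_of_ne_zero hf00)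
          have hFd : F.natDegree = d * q.natDegree := by rw [hFdeg, htf]; simp
          rw [if_pos ((degle hG0 hF0).mpr (by omega))]
          rw [hFlc, hGlc, htf, htg]
          rw [show f.trailingCoeff = f.coeff f.natTrailingDegree from rfl,
            show g.trailingCoeff = g.coeff g.natTrailingDegree from rfl, htf, htg]
          congr 1
          field_simp
    · -- dp = dq
      have hemax : max p.natDegree q.natDegree = q.natDegree := by omega
      have hs : ratEval p q ∞ = ((p.leadingCoeff / q.leadingCoeff : ℂ) : OnePoint ℂ) := by
        rw [ratEval_infty, if_pos ((degle hp0 hq0).mpr hpq'.le),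
          if_pos ((degle hq0 hp0).mpr hpq'.ge)]
      obtain ⟨hFle, hFtop⟩ := homPoly_coeff_top f p q d hp0 hq0 hfd hpq'
      obtain ⟨hGle, hGtop⟩ := homPoly_coeff_top g p q d hp0 hq0 hgd hpq'
      rw [← hFdef] at hFle hFtop
      rw [← hGdef] at hGle hGtop
      have hde2 : 1 ≤ d * q.natDegree := by
        have : 1 ≤ q.natDegree := by omega
        have : 1 * 1 ≤ d * q.natDegree := Nat.mul_le_mul (by omega) this
        omega
      set s : ℂ := p.leadingCoeff / q.leadingCoeff with hsdef
      rw [hs, ratEval_coe f g, ratEval_infty F G]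
      by_cases hgs : g.eval s = 0
      · -- g(s) = 0 : f(s) ≠ 0, deg F = top, deg G < top
        have hfs : f.eval s ≠ 0 := fun hh => coprime_eval_ne f g hfg s hh hgs
        have hFtop' : F.coeff (d * q.natDegree) ≠ 0 := by
          rw [hFtop]
          exact mul_ne_zero (pow_ne_zero _ hlcq) hfs
        have hFd : F.natDegree = d * q.natDegree :=
          le_antisymm hFle (le_natDegree_of_ne_zero hFtop')
        have hF0 : F ≠ 0 := fun hh => hFtop' (by rw [hh]; simp)
        have hGtop' : G.coeff (d * q.natDegree) = 0 := by rw [hGtop, hgs, mul_zero]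
        have hGd : G.natDegree < d * q.natDegree := by
          rcases lt_or_eq_of_le hGle with h | h
          · exact h
          · exfalso
            have hG0 : G ≠ 0 := by
              intro hG0'
              obtain ⟨a, ha⟩ := IsAlgClosed.exists_root F (by
                rw [degree_eq_natDegree hF0, hFd]
                simp only [ne_eq, Nat.cast_eq_zero]
                omega)
              exact hno a ha (by rw [hG0']; simp)
            exact (leadingCoeff_ne_zero.mpr hG0) (by rw [leadingCoeff, h]; exact hGtop')
        constructor
        · rw [hemax]; omega
        · rw [if_pos hgs, if_neg (fun hh => absurd ((degle hF0 (by
            intro hG0'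
            obtain ⟨a, ha⟩ := IsAlgClosed.exists_root F (by
              rw [degree_eq_natDegree hF0, hFd]
              simp only [ne_eq, Nat.cast_eq_zero]
              omega)
            exact hno a ha (by rw [hG0']; simp))).mp hh) (by omega))]
      · have hGtop' : G.coeff (d * q.natDegree) ≠ 0 := by
          rw [hGtop]
          exact mul_ne_zero (pow_ne_zero _ hlcq) hgs
        have hGd : G.natDegree = d * q.natDegree :=
          le_antisymm hGle (le_natDegree_of_ne_zero hGtop')
        have hG0 : G ≠ 0 := fun hh => hGtop' (by rw [hh]; simp)
        have hmax : max F.natDegree G.natDegree = d * max p.natDegree q.natDegree := by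
          rw [hemax]; omega
        refine ⟨hmax, ?_⟩
        rw [if_neg hgs, if_pos (by
          rcases eq_or_ne F 0 with h | h
          · rw [h, degree_zero]; exact bot_le
          · exact (degle h hG0).mpr (by omega))]
        by_cases hfs : f.eval s = 0
        · have hFtop' : F.coeff (d * q.natDegree) = 0 := by rw [hFtop, hfs, mul_zero]
          have hFlt : F.degree < G.degree := by
            apply degree_lt_degree
            rw [hGd]
            rcases lt_or_eq_of_le hFle with h | h
            · exact h
            · exfalso
              rcases eq_or_ne F 0 with h0 | h0
              · rw [h0] at h; simp at h; omega
              · exact (leadingCoeff_ne_zero.mpr h0) (by rw [leadingCoeff, h]; exact hFtop')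
          rw [if_neg (fun hh => absurd hh (not_le_of_gt hFlt)), hfs, zero_div]
        · have hFtop' : F.coeff (d * q.natDegree) ≠ 0 := by
            rw [hFtop]
            exact mul_ne_zero (pow_ne_zero _ hlcq) hfs
          have hFd : F.natDegree = d * q.natDegree :=
            le_antisymm hFle (le_natDegree_of_ne_zero hFtop')
          have hF0 : F ≠ 0 := fun hh => hFtop' (by rw [hh]; simp)
          rw [if_pos ((degle hG0 hF0).mpr (by omega))]
          rw [leadingCoeff, leadingCoeff, hFd, hGd, hFtop, hGtop]
          rw [mul_div_mul_left _ _ (pow_ne_zero _ hlcq)]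
    · -- dq < dp : use leading degrees
      have hemax : max p.natDegree q.natDegree = p.natDegree := max_eq_left hpq'.le
      have hpsi : ratEval p q ∞ = ∞ := by
        rw [ratEval_infty, if_neg (fun hh => absurd ((degle hp0 hq0).mp hh) (by omega))]
      have hspec : ∀ h : Polynomial ℂ, h ≠ 0 → h.natDegree ≤ d →
          (homPoly h p q d).natDegree
            = h.natDegree * p.natDegree + (d - h.natDegree) * q.natDegree ∧
          (homPoly h p q d).leadingCoeff = h.leadingCoeff * p.leadingCoeff ^ h.natDegree
            * q.leadingCoeff ^ (d - h.natDegree) := by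
        intro h h0 hhd
        refine homPoly_coeff_spec h p q d h.natDegree hp0 hq0 hhd
          (by rw [coeff_natDegree]; exact leadingCoeff_ne_zero.mpr h0) (fun i hid hc hne => ?_)
        exact nu_gt _ _ _ _ _ hpq' (lt_of_le_of_ne (le_natDegree_of_ne_zero hc) hne) hhd
      obtain ⟨hFdeg, hFlc⟩ := hspec f hf0 hfd
      obtain ⟨hGdeg, hGlc⟩ := hspec g hg0 hgd
      rw [← hFdef] at hFdeg hFlc
      rw [← hGdef] at hGdeg hGlc
      have hF0 : F ≠ 0 := leadingCoeff_ne_zero.mp (by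
        rw [hFlc]
        exact mul_ne_zero (mul_ne_zero hlcf (pow_ne_zero _ hlcp)) (pow_ne_zero _ hlcq))
      have hG0 : G ≠ 0 := leadingCoeff_ne_zero.mp (by
        rw [hGlc]
        exact mul_ne_zero (mul_ne_zero hlcg (pow_ne_zero _ hlcp)) (pow_ne_zero _ hlcq))
      have hmax : max F.natDegree G.natDegree = d * max p.natDegree q.natDegree := by
        rw [hemax]
        rcases max_choice f.natDegree g.natDegree with h | h
        · have hfdd : f.natDegree = d := by omega
          have hFd : F.natDegree = d * p.natDegree := by rw [hFdeg, hfdd]; simp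
          have : G.natDegree ≤ d * p.natDegree := by
            rw [hGdeg]
            rcases lt_or_eq_of_le hgd with h2 | h2
            · exact le_of_lt (by
                have h3 := nu_gt p.natDegree q.natDegree d g.natDegree d hpq' h2 (le_refl d)
                simpa using h3)
            · rw [h2]; simp
          omega
        · have hgdd : g.natDegree = d := by omega
          have hGd : G.natDegree = d * p.natDegree := by rw [hGdeg, hgdd]; simp
          have : F.natDegree ≤ d * p.natDegree := by
            rw [hFdeg]
            rcases lt_or_eq_of_le hfd with h2 | h2
            · exact le_of_lt (by
                have h3 := nu_gt p.natDegree q.natDegree d f.natDegree d hpq' h2 (le_refl d)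
                simpa using h3)
            · rw [h2]; simp
          omega
      refine ⟨hmax, ?_⟩
      rw [hpsi, ratEval_infty f g, ratEval_infty F G]
      rcases lt_trichotomy f.natDegree g.natDegree with hfg' | hfg' | hfg'
      · have hFG : F.natDegree < G.natDegree := by
          rw [hFdeg, hGdeg]
          exact nu_gt p.natDegree q.natDegree d f.natDegree g.natDegree hpq' hfg' hgd
        rw [if_pos ((degle hf0 hg0).mpr hfg'.le), if_pos ((degle hF0 hG0).mpr hFG.le),
          if_neg (fun hh => absurd ((degle hg0 hf0).mp hh) (by omega)),
          if_neg (fun hh => absurd ((degle hG0 hF0).mp hh) (by omega))]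
      · have hFG : F.natDegree = G.natDegree := by rw [hFdeg, hGdeg, hfg']
        rw [if_pos ((degle hf0 hg0).mpr hfg'.le), if_pos ((degle hF0 hG0).mpr hFG.le),
          if_pos ((degle hg0 hf0).mpr hfg'.ge), if_pos ((degle hG0 hF0).mpr hFG.ge)]
        rw [hFlc, hGlc, hfg']
        congr 1
        field_simp
      · have hFG : G.natDegree < F.natDegree := by
          rw [hFdeg, hGdeg]
          exact nu_gt p.natDegree q.natDegree d g.natDegree f.natDegree hpq' hfg' hfd
        rw [if_neg (fun hh => absurd ((degle hf0 hg0).mp hh) (by omega)),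
          if_neg (fun hh => absurd ((degle hF0 hG0).mp hh) (by omega))]
  -- assemble
  obtain ⟨hmax, hinf⟩ := key
  have hF0 : F ≠ 0 := by
    intro hF0'
    have hG1 : 1 ≤ G.natDegree := by
      rw [hF0'] at hmax
      simp only [natDegree_zero] at hmax
      have : 2 ≤ d * max p.natDegree q.natDegree := by
        calc 2 = 2 * 1 := by ring
        _ ≤ d * max p.natDegree q.natDegree := Nat.mul_le_mul hd2 he1
      omega
    have hG0 : G ≠ 0 := fun hh => by rw [hh] at hG1; simp at hG1
    obtain ⟨a, ha⟩ := IsAlgClosed.exists_root G (by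
      rw [degree_eq_natDegree hG0]
      simp only [ne_eq, Nat.cast_eq_zero]
      omega)
    exact hno a (by rw [hF0']; simp) ha.eq_zero
  refine ⟨F, G, isCoprime_of_no_common_root hF0 hno, hmax, fun x => ?_⟩
  have hx : x = ∞ ∨ ∃ a : ℂ, x = (a : OnePoint ℂ) :=
    Option.rec (Or.inl rfl) (fun a => Or.inr ⟨a, rfl⟩) x
  rcases hx with rfl | ⟨a, rfl⟩
  · exact hinf
  · exact hfin a

theorem iterate_spec (f g : Polynomial ℂ) (hfg : IsCoprime f g)
    (hd2 : 2 ≤ max f.natDegree g.natDegree) (n : ℕ) :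
    ∃ F G : Polynomial ℂ, IsCoprime F G ∧
      max F.natDegree G.natDegree = (max f.natDegree g.natDegree) ^ n ∧
      ∀ x, ratEval F G x = (ratEval f g)^[n] x := by
  induction n with
  | zero =>
    refine ⟨X, 1, isCoprime_one_right, ?_, fun x => ?_⟩
    · simp [natDegree_X, natDegree_one]
    · have hx : x = ∞ ∨ ∃ a : ℂ, x = (a : OnePoint ℂ) :=
        Option.rec (Or.inl rfl) (fun a => Or.inr ⟨a, rfl⟩) x
      rcases hx with rfl | ⟨a, rfl⟩
      · rw [ratEval_infty]
        rw [if_neg (by rw [degree_X, degree_one]; exact fun hh => by norm_num at hh)]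
        simp
      · rw [ratEval_coe]
        rw [if_neg (by simp)]
        simp
  | succ n ih =>
    obtain ⟨P, Q, hPQ, hdeg, hpt⟩ := ih
    have he1 : 1 ≤ max P.natDegree Q.natDegree := by
      rw [hdeg]
      exact Nat.one_le_pow _ _ (by omega)
    obtain ⟨F, G, hFG, hFGdeg, hFGpt⟩ := comp_spec f g P Q hfg hPQ hd2 he1
    refine ⟨F, G, hFG, ?_, fun x => ?_⟩
    · rw [hFGdeg, hdeg, ← pow_succ']
    · rw [hFGpt x, hpt x, Function.iterate_succ_apply']


/-- For any rational map φ of degree d ≥ 2 on ℙ¹(ℂ) and any Δ ≥ 1 there is a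
point α with φ^(Δ)(φ(α)) = φ(α) but φ^(Δ)(α) ≠ α. -/
theorem exists_preperiodic_not_periodic (f g : Polynomial ℂ)
    (hcop : IsCoprime f g) (h2 : 2 ≤ max f.natDegree g.natDegree)
    (Δ : ℕ) (hΔ : 1 ≤ Δ) :
    ∃ α : OnePoint ℂ,
      (ratEval f g)^[Δ] (ratEval f g α) = ratEval f g α ∧
      (ratEval f g)^[Δ] α ≠ α := by
  by_contra hcon
  push_neg at hcon
  -- hcon : ∀ α, iterate fixed of image → iterate fixed of α
  have hchain : ∀ (k : ℕ) (x : OnePoint ℂ),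
      (ratEval f g)^[Δ] ((ratEval f g)^[k] x) = (ratEval f g)^[k] x →
      (ratEval f g)^[Δ] x = x := by
    intro k
    induction k with
    | zero => intro x hx; simpa using hx
    | succ k ih =>
      intro x hx
      rw [Function.iterate_succ_apply] at hx
      exact hcon x (ih (ratEval f g x) hx)
  obtain ⟨F, G, hFG, hdeg, hpt⟩ := iterate_spec f g hcop h2 Δ
  set D := max F.natDegree G.natDegree with hDdef
  have hD2 : 2 ≤ D := by
    rw [hdeg]
    calc 2 ≤ max f.natDegree g.natDegree := h2
    _ = (max f.natDegree g.natDegree) ^ 1 := (pow_one _).symm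
    _ ≤ (max f.natDegree g.natDegree) ^ Δ := Nat.pow_le_pow_right (by omega) hΔ
  obtain ⟨hF0, hG0⟩ := ne_zero_of_coprime_maxdeg hFG (by omega)
  -- fibers over fixed points of the iterate are singletons
  have hfib : ∀ (β x : OnePoint ℂ), ratEval F G β = β → ratEval F G x = β → x = β := by
    intro β x hβ hx
    have hRR : ratEval F G (ratEval F G x) = ratEval F G x := by rw [hx]; exact hβ
    rw [hpt x, hpt ((ratEval f g)^[Δ] x)] at hRR
    have h2 := hchain Δ x hRR
    rw [← hpt x, hx] at h2
    exact h2.symm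
  by_cases hinf : ratEval F G ∞ = ∞
  · -- Case 1 : infinity is fixed, so G is constant and F/c a polynomial of degree D
    have hdGF : ¬ (F.degree ≤ G.degree) := by
      intro hh
      by_cases h3 : G.degree ≤ F.degree
      · rw [ratEval_infty, if_pos hh, if_pos h3] at hinf
        exact OnePoint.coe_ne_infty _ hinf
      · rw [ratEval_infty, if_pos hh, if_neg h3] at hinf
        exact OnePoint.coe_ne_infty _ hinf
    have hGFnat : G.natDegree < F.natDegree :=
      natDegree_lt_natDegree hG0 (lt_of_not_ge hdGF)
    have hFD : F.natDegree = D := by rw [hDdef]; omega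
    have hGnoroot : ∀ x : ℂ, G.eval x ≠ 0 := by
      intro x hx
      have hRx : ratEval F G (x : OnePoint ℂ) = ∞ := by rw [ratEval_coe, if_pos hx]
      exact OnePoint.coe_ne_infty x (hfib ∞ (x : OnePoint ℂ) hinf hRx)
    have hGdeg0 : G.natDegree = 0 := by
      by_contra hh
      obtain ⟨a, ha⟩ := IsAlgClosed.exists_root G (by
        rw [degree_eq_natDegree hG0]
        simp only [ne_eq, Nat.cast_eq_zero]
        omega)
      exact hGnoroot a ha.eq_zero
    set c := G.coeff 0 with hcdef
    have hGC : G = C c := eq_C_of_natDegree_eq_zero hGdeg0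
    have hc : c ≠ 0 := fun hh => hG0 (by rw [hGC, hh, map_zero])
    have heval : ∀ x : ℂ, ratEval F G (x : OnePoint ℂ) = ((F.eval x / c : ℂ) : OnePoint ℂ) := by
      intro x
      rw [ratEval_coe, hGC, eval_C, if_neg hc]
    have hlcF : F.leadingCoeff ≠ 0 := leadingCoeff_ne_zero.mpr hF0
    have hFcoeffD : F.coeff D ≠ 0 := by rw [← hFD, coeff_natDegree]; exact hlcF
    -- find a finite fixed point a
    have hKcoeff : (F - C c * X).coeff D = F.coeff D := by
      rw [coeff_sub, coeff_C_mul, coeff_X, if_neg (by omega)]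
      ring
    have hK0 : F - C c * X ≠ 0 := fun hh => hFcoeffD (by rw [← hKcoeff, hh, coeff_zero])
    obtain ⟨a, ha⟩ := IsAlgClosed.exists_root (F - C c * X) (by
      rw [degree_eq_natDegree hK0]
      simp only [ne_eq, Nat.cast_eq_zero]
      have := le_natDegree_of_ne_zero (hKcoeff ▸ hFcoeffD)
      omega)
    have hFa : F.eval a = c * a := by
      have := ha.eq_zero
      simp only [eval_sub, eval_mul, eval_C, eval_X] at this
      linear_combination this
    have hafix : ratEval F G (a : OnePoint ℂ) = (a : OnePoint ℂ) := by
      rw [heval, hFa, mul_div_cancel_left₀ _ hc]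
    -- generic fact about finite fixed points
    have hfixfac : ∀ b : ℂ, ratEval F G (b : OnePoint ℂ) = (b : OnePoint ℂ) →
        (F - C (b * c) = C F.leadingCoeff * (X - C b) ^ D) ∧
        derivative F = C F.leadingCoeff * (C (D : ℂ) * (X - C b) ^ (D - 1)) := by
      intro b hbfix
      set P := F - C (b * c) with hPdef
      have hPcoeffD : P.coeff D = F.coeff D := by
        rw [hPdef, coeff_sub, coeff_C, if_neg (by omega)]
        ring
      have hP0 : P ≠ 0 := fun hh => hFcoeffD (by rw [← hPcoeffD, hh, coeff_zero])
      have hPD : P.natDegree = D := by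
        have h1 : P.natDegree ≤ D := by
          rw [hPdef]
          refine (natDegree_sub_le _ _).trans (max_le (le_of_eq hFD) ?_)
          rw [natDegree_C]
          omega
        exact le_antisymm h1 (le_natDegree_of_ne_zero (hPcoeffD ▸ hFcoeffD))
      have hProots : ∀ x : ℂ, P.IsRoot x → x = b := by
        intro x hx
        have hFx : F.eval x = b * c := by
          have := hx
          simp only [hPdef, IsRoot, eval_sub, eval_C] at this
          linear_combination this
        have hRx : ratEval F G (x : OnePoint ℂ) = (b : OnePoint ℂ) := by
          rw [heval, hFx, mul_div_cancel_right₀ _ hc]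
        exact OnePoint.coe_eq_coe.mp (hfib _ _ hbfix hRx)
      have hPlc : P.leadingCoeff = F.leadingCoeff := by
        rw [leadingCoeff, hPD, hPcoeffD, ← hFD, coeff_natDegree]
      have hfac := eq_pow_of_roots_subset b hP0 hProots
      rw [hPD, hPlc] at hfac
      refine ⟨hfac, ?_⟩
      have hder : derivative P = derivative F := by
        rw [hPdef, derivative_sub, derivative_C, sub_zero]
      rw [← hder, hfac, derivative_C_mul, derivative_pow, derivative_sub, derivative_X,
        derivative_C, sub_zero, mul_one]
    obtain ⟨hfacA, hderA⟩ := hfixfac a hafix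
    -- construct a second fixed point b = a + w ≠ a
    obtain ⟨w, hw⟩ := IsAlgClosed.exists_root (X ^ (D - 1) - C (c / F.leadingCoeff)) (by
      rw [degree_X_pow_sub_C (by omega : 0 < D - 1)]
      simp only [ne_eq, Nat.cast_eq_zero]
      omega)
    have hwpow : w ^ (D - 1) = c / F.leadingCoeff := by
      have := hw.eq_zero
      simp only [eval_sub, eval_pow, eval_X, eval_C] at this
      linear_combination this
    have hw0 : w ≠ 0 := by
      intro hh
      rw [hh, zero_pow (by omega : D - 1 ≠ 0)] at hwpow
      rcases div_eq_zero_iff.mp hwpow.symm with h | h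
      · exact hc h
      · exact hlcF h
    have hba : a + w ≠ a := by
      intro hh
      exact hw0 (by linear_combination hh)
    have hFb : F.eval (a + w) = c * (a + w) := by
      have h1 : F.eval (a + w) - a * c = F.leadingCoeff * w ^ D := by
        have h0 := congrArg (eval (a + w)) hfacA
        simp only [eval_sub, eval_C, eval_mul, eval_pow, eval_X, add_sub_cancel_left] at h0
        linear_combination h0
      have h2 : F.leadingCoeff * w ^ D = c * w := by
        have hD1 : w ^ D = w ^ (D - 1) * w := by rw [← pow_succ]; congr 1; omega
        rw [hD1, hwpow]
        field_simp
      linear_combination h1 + h2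
    have hbfix : ratEval F G ((a + w : ℂ) : OnePoint ℂ) = ((a + w : ℂ) : OnePoint ℂ) := by
      rw [heval, hFb, mul_div_cancel_left₀ _ hc]
    obtain ⟨-, hderB⟩ := hfixfac (a + w) hbfix
    have heq : (X - C a) ^ (D - 1) = (X - C (a + w)) ^ (D - 1) := by
      have h3 := hderA.symm.trans hderB
      have h4 := mul_left_cancel₀
        (show (C F.leadingCoeff : Polynomial ℂ) ≠ 0 by simpa using hlcF) h3
      exact mul_left_cancel₀
        (show (C ((D : ℕ) : ℂ) : Polynomial ℂ) ≠ 0 by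
          simp only [ne_eq, C_eq_zero, Nat.cast_eq_zero]
          omega) h4
    have h5 := congrArg (eval a) heq
    simp only [eval_pow, eval_sub, eval_X, eval_C, sub_self] at h5
    rw [zero_pow (by omega : D - 1 ≠ 0)] at h5
    have h6 : a - (a + w) = 0 := pow_eq_zero_iff (by omega : D - 1 ≠ 0) |>.mp h5.symm
    exact hba (by linear_combination -h6)
  · -- Case 2 : infinity is not fixed
    have hdFG : F.degree ≤ G.degree := by
      by_contra hh
      rw [ratEval_infty, if_neg hh] at hinf
      exact hinf rfl
    have hFleD : F.natDegree ≤ G.natDegree := natDegree_le_natDegree hdFG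
    have hGD : G.natDegree = D := by rw [hDdef]; omega
    have hGlcD : G.coeff D ≠ 0 := by
      rw [← hGD, coeff_natDegree]
      exact leadingCoeff_ne_zero.mpr hG0
    set H := F - X * G with hHdef
    have hHcoeff : H.coeff (D + 1) = -(G.coeff D) := by
      rw [hHdef, coeff_sub, coeff_X_mul, coeff_eq_zero_of_natDegree_lt (by omega), zero_sub]
    have hH0 : H ≠ 0 := by
      intro hh
      rw [hh, coeff_zero] at hHcoeff
      exact hGlcD (neg_eq_zero.mp hHcoeff.symm)
    have hHD : H.natDegree = D + 1 := by
      refine le_antisymm ?_ (le_natDegree_of_ne_zero (by rw [hHcoeff]; simpa using hGlcD))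
      rw [hHdef]
      refine (natDegree_sub_le _ _).trans (max_le (by omega) ?_)
      rw [natDegree_mul X_ne_zero hG0, natDegree_X]
      omega
    have hGF_ne : ∀ x : ℂ, G.eval x = 0 → F.eval x ≠ 0 :=
      fun x hx => coprime_eval_ne G F hFG.symm x hx
    -- structure at each root of H
    have hroot : ∀ a : ℂ, H.IsRoot a →
        G.eval a ≠ 0 ∧ ratEval F G (a : OnePoint ℂ) = (a : OnePoint ℂ) ∧ ∃ lc : ℂ, lc ≠ 0 ∧
          F - C a * G = C lc * (X - C a) ^ D ∧
          derivative F - C a * derivative G = C lc * (C (D : ℂ) * (X - C a) ^ (D - 1)) := by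
      intro a ha
      have h0 := ha.eq_zero
      rw [hHdef] at h0
      simp only [eval_sub, eval_mul, eval_X] at h0
      have hHa : F.eval a = a * G.eval a := by linear_combination h0
      have hGa : G.eval a ≠ 0 := by
        intro hz
        exact hGF_ne a hz (by rw [hHa, hz, mul_zero])
      have hafix : ratEval F G (a : OnePoint ℂ) = (a : OnePoint ℂ) := by
        rw [ratEval_coe, if_neg hGa, hHa, mul_div_cancel_right₀ _ hGa]
      have hRinf_ne : ratEval F G ∞ ≠ (a : OnePoint ℂ) :=
        fun hcontra => OnePoint.infty_ne_coe a (hfib _ ∞ hafix hcontra)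
      set P := F - C a * G with hPdef
      have hPcoeff : P.coeff D = F.coeff D - a * G.coeff D := by
        rw [hPdef, coeff_sub, coeff_C_mul]
      have hPtop : P.coeff D ≠ 0 := by
        by_cases hGF2 : G.degree ≤ F.degree
        · have hFDnat : F.natDegree = D := by
            have := natDegree_le_natDegree hGF2
            omega
          have hval : ratEval F G ∞ = ((F.leadingCoeff / G.leadingCoeff : ℂ) : OnePoint ℂ) := by
            rw [ratEval_infty, if_pos hdFG, if_pos hGF2]
          have hne : F.leadingCoeff / G.leadingCoeff ≠ a :=
            fun hh => hRinf_ne (by rw [hval, hh])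
          intro hz
          rw [hPcoeff] at hz
          apply hne
          have hFc : F.coeff D = F.leadingCoeff := by rw [← hFDnat, coeff_natDegree]
          have hGc : G.coeff D = G.leadingCoeff := by rw [← hGD, coeff_natDegree]
          rw [hFc, hGc] at hz
          have hGlc' : G.leadingCoeff ≠ 0 := leadingCoeff_ne_zero.mpr hG0
          rw [div_eq_iff hGlc']
          linear_combination hz
        · have hlt : F.degree < G.degree := not_le.mp hGF2
          have hFcoeff0 : F.coeff D = 0 := by
            refine coeff_eq_zero_of_degree_lt ?_
            calc F.degree < G.degree := hlt
            _ = (D : WithBot ℕ) := by rw [degree_eq_natDegree hG0, hGD]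
            _ ≤ (D : WithBot ℕ) := le_refl _
          have hval : ratEval F G ∞ = ((0 : ℂ) : OnePoint ℂ) := by
            rw [ratEval_infty, if_pos hdFG, if_neg hGF2]
          have ha0 : a ≠ 0 := fun hh => hRinf_ne (by rw [hval, hh])
          rw [hPcoeff, hFcoeff0, zero_sub]
          exact neg_ne_zero.mpr (mul_ne_zero ha0 hGlcD)
      have hP0 : P ≠ 0 := fun hh => hPtop (by rw [hh, coeff_zero])
      have hPD : P.natDegree = D := by
        refine le_antisymm ?_ (le_natDegree_of_ne_zero hPtop)
        rw [hPdef]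
        exact (natDegree_sub_le _ _).trans
          (max_le (by omega) ((natDegree_C_mul_le _ _).trans (by omega)))
      have hProots : ∀ x : ℂ, P.IsRoot x → x = a := by
        intro x hx
        have hx0 := hx.eq_zero
        rw [hPdef] at hx0
        simp only [eval_sub, eval_mul, eval_C] at hx0
        have hPx : F.eval x = a * G.eval x := by linear_combination hx0
        have hGx : G.eval x ≠ 0 := fun hz => hGF_ne x hz (by rw [hPx, hz, mul_zero])
        have hRx : ratEval F G (x : OnePoint ℂ) = (a : OnePoint ℂ) := by
          rw [ratEval_coe, if_neg hGx, hPx, mul_div_cancel_right₀ _ hGx]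
        exact OnePoint.coe_eq_coe.mp (hfib _ _ hafix hRx)
      have hfac := eq_pow_of_roots_subset a hP0 hProots
      rw [hPD] at hfac
      refine ⟨hGa, hafix, P.leadingCoeff, leadingCoeff_ne_zero.mpr hP0, hfac, ?_⟩
      have hder : derivative P = derivative F - C a * derivative G := by
        rw [hPdef, derivative_sub, derivative_C_mul]
      have hder2 : derivative P = C P.leadingCoeff * (C (D : ℂ) * (X - C a) ^ (D - 1)) := by
        conv_lhs => rw [hfac]
        rw [derivative_C_mul, derivative_pow, derivative_sub, derivative_X, derivative_C,
          sub_zero, mul_one]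
      rw [← hder]
      exact hder2
    -- roots of H are simple
    have hH' : derivative H = derivative F - (G + X * derivative G) := by
      rw [hHdef, derivative_sub, derivative_mul, derivative_X, one_mul]
    have hHsimple : ∀ a : ℂ, H.IsRoot a → (derivative H).eval a ≠ 0 := by
      intro a ha
      obtain ⟨hGa, -, lc, hlc, -, hfacP'⟩ := hroot a ha
      have h1 : (derivative F).eval a - a * (derivative G).eval a = 0 := by
        have h0 := congrArg (eval a) hfacP'
        simp only [eval_sub, eval_mul, eval_C, eval_pow, eval_X, sub_self,
          zero_pow (show D - 1 ≠ 0 by omega), mul_zero] at h0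
        exact h0
      rw [hH']
      simp only [eval_sub, eval_add, eval_mul, eval_X]
      intro hcontra
      exact hGa (by linear_combination h1 - hcontra)
    have hcard : Multiset.card H.roots = D + 1 := by
      rw [IsAlgClosed.card_roots_eq_natDegree, hHD]
    have hnodup : H.roots.Nodup := by
      rw [Multiset.nodup_iff_count_le_one]
      intro a
      by_contra hcnt
      push_neg at hcnt
      have hmem : a ∈ H.roots := Multiset.count_pos.mp (by omega)
      have haroot : H.IsRoot a := (mem_roots hH0).mp hmem
      have hmul : 2 ≤ rootMultiplicity a H := by rw [← count_roots]; omega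
      obtain ⟨Q, hQ⟩ := (pow_dvd_pow _ hmul).trans (pow_rootMultiplicity_dvd H a)
      apply hHsimple a haroot
      rw [hQ, derivative_mul, derivative_pow]
      simp [sub_self]
    have htFcard : H.roots.toFinset.card = D + 1 := by
      rw [Multiset.toFinset_card_of_nodup hnodup, hcard]
    obtain ⟨a1, ha1⟩ := Finset.card_pos.mp (show 0 < H.roots.toFinset.card by omega)
    obtain ⟨a2, ha2⟩ := Finset.card_pos.mp
      (show 0 < (H.roots.toFinset.erase a1).card by rw [Finset.card_erase_of_mem ha1]; omega)
    have h21 : a2 ≠ a1 := (Finset.mem_erase.mp ha2).1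
    have ha2' : a2 ∈ H.roots.toFinset := (Finset.mem_erase.mp ha2).2
    obtain ⟨a3, ha3⟩ := Finset.card_pos.mp
      (show 0 < ((H.roots.toFinset.erase a1).erase a2).card by
        rw [Finset.card_erase_of_mem ha2, Finset.card_erase_of_mem ha1]; omega)
    have h32 : a3 ≠ a2 := (Finset.mem_erase.mp ha3).1
    have ha3' : a3 ∈ H.roots.toFinset.erase a1 := (Finset.mem_erase.mp ha3).2
    have h31 : a3 ≠ a1 := (Finset.mem_erase.mp ha3').1
    have ha3'' : a3 ∈ H.roots.toFinset := (Finset.mem_erase.mp ha3').2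
    have hr1 : H.IsRoot a1 := (mem_roots hH0).mp (Multiset.mem_toFinset.mp ha1)
    have hr2 : H.IsRoot a2 := (mem_roots hH0).mp (Multiset.mem_toFinset.mp ha2')
    have hr3 : H.IsRoot a3 := (mem_roots hH0).mp (Multiset.mem_toFinset.mp ha3'')
    -- the Wronskian
    set W := derivative F * G - F * derivative G with hWdef
    have hWfac : ∀ a : ℂ, H.IsRoot a → ∃ Q : Polynomial ℂ,
        W = (X - C a) ^ (D - 1) * Q ∧ Q.natDegree ≤ D - 1 ∧ Q.eval a ≠ 0 := by
      intro a ha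
      obtain ⟨hGa, -, lc, hlc, hfacP, hfacP'⟩ := hroot a ha
      refine ⟨C lc * (C (D : ℂ) * G - (X - C a) * derivative G), ?_, ?_, ?_⟩
      · have hWeq : W = (derivative F - C a * derivative G) * G
            - (F - C a * G) * derivative G := by
          rw [hWdef]; ring
        rw [hWeq, hfacP, hfacP']
        have hpow : (X - C a) ^ D = (X - C a) ^ (D - 1) * (X - C a) := by
          rw [← pow_succ]; congr 1; omega
        rw [hpow]
        ring
      · have hsub : (C (D : ℂ) * G - (X - C a) * derivative G).natDegree ≤ D := by
          refine (natDegree_sub_le _ _).trans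
            (max_le ((natDegree_C_mul_le _ _).trans (by omega)) ?_)
          refine natDegree_mul_le.trans ?_
          have hd := natDegree_derivative_le G
          rw [natDegree_X_sub_C]
          omega
        have hXc : (X * derivative G).coeff D = (derivative G).coeff (D - 1) := by
          conv_lhs => rw [show D = (D - 1) + 1 by omega]
          rw [coeff_X_mul]
        have hXG : ((X - C a) * derivative G).coeff D
            = (derivative G).coeff (D - 1) - a * (derivative G).coeff D := by
          rw [sub_mul, coeff_sub, coeff_C_mul, hXc]
        have hd1 : (derivative G).coeff (D - 1) = G.coeff D * (D : ℂ) := by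
          rw [coeff_derivative]
          have hDD : D - 1 + 1 = D := by omega
          rw [hDD, Nat.cast_sub (by omega : 1 ≤ D)]
          push_cast
          ring
        have hd2 : (derivative G).coeff D = 0 := by
          rw [coeff_derivative, coeff_eq_zero_of_natDegree_lt (by omega), zero_mul]
        have hcoeffD : (C lc * (C (D : ℂ) * G - (X - C a) * derivative G)).coeff D = 0 := by
          rw [coeff_C_mul, coeff_sub, coeff_C_mul, hXG, hd1, hd2]
          ring
        rw [natDegree_le_iff_coeff_eq_zero]
        intro N hN
        by_cases hND : N = D
        · rw [hND]; exact hcoeffD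
        · exact coeff_eq_zero_of_natDegree_lt
            (lt_of_le_of_lt ((natDegree_C_mul_le _ _).trans hsub) (by omega))
      · simp only [eval_mul, eval_sub, eval_C, eval_X, sub_self, zero_mul, sub_zero]
        exact mul_ne_zero hlc (mul_ne_zero (Nat.cast_ne_zero.mpr (by omega)) hGa)
    obtain ⟨Q1, hQ1, hQ1d, hQ1e⟩ := hWfac a1 hr1
    obtain ⟨Q2, hQ2, -, -⟩ := hWfac a2 hr2
    obtain ⟨Q3, hQ3, -, -⟩ := hWfac a3 hr3
    have hW0 : W ≠ 0 := by
      intro hh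
      rw [hh] at hQ1
      rcases mul_eq_zero.mp hQ1.symm with h | h
      · exact pow_ne_zero _ (X_sub_C_ne_zero a1) h
      · exact hQ1e (by rw [h, eval_zero])
    have hQ10 : Q1 ≠ 0 := fun hh => hQ1e (by rw [hh, eval_zero])
    have hWdeg : W.natDegree ≤ 2 * D - 2 := by
      rw [hQ1, natDegree_mul (pow_ne_zero _ (X_sub_C_ne_zero a1)) hQ10,
        natDegree_pow, natDegree_X_sub_C]
      omega
    have hdvd1 : (X - C a1) ^ (D - 1) ∣ W := ⟨Q1, hQ1⟩
    have hdvd2 : (X - C a2) ^ (D - 1) ∣ W := ⟨Q2, hQ2⟩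
    have hdvd3 : (X - C a3) ^ (D - 1) ∣ W := ⟨Q3, hQ3⟩
    have hcop12 : IsCoprime ((X - C a1) ^ (D - 1)) ((X - C a2) ^ (D - 1)) :=
      (isCoprime_X_sub_C_of_isUnit_sub
        (isUnit_iff_ne_zero.mpr (sub_ne_zero.mpr (fun hh => h21 hh.symm)))).pow
    have hcop13 : IsCoprime ((X - C a1) ^ (D - 1)) ((X - C a3) ^ (D - 1)) :=
      (isCoprime_X_sub_C_of_isUnit_sub
        (isUnit_iff_ne_zero.mpr (sub_ne_zero.mpr (fun hh => h31 hh.symm)))).pow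
    have hcop23 : IsCoprime ((X - C a2) ^ (D - 1)) ((X - C a3) ^ (D - 1)) :=
      (isCoprime_X_sub_C_of_isUnit_sub
        (isUnit_iff_ne_zero.mpr (sub_ne_zero.mpr (fun hh => h32 hh.symm)))).pow
    have hdvd12 : ((X - C a1) ^ (D - 1) * (X - C a2) ^ (D - 1)) ∣ W :=
      hcop12.mul_dvd hdvd1 hdvd2
    have hcop3 : IsCoprime ((X - C a1) ^ (D - 1) * (X - C a2) ^ (D - 1))
        ((X - C a3) ^ (D - 1)) := IsCoprime.mul_left hcop13 hcop23
    have hdvd123 : ((X - C a1) ^ (D - 1) * (X - C a2) ^ (D - 1) * (X - C a3) ^ (D - 1)) ∣ W :=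
      hcop3.mul_dvd hdvd12 hdvd3
    have hdegprod := natDegree_le_of_dvd hdvd123 hW0
    rw [natDegree_mul (mul_ne_zero (pow_ne_zero _ (X_sub_C_ne_zero a1))
        (pow_ne_zero _ (X_sub_C_ne_zero a2))) (pow_ne_zero _ (X_sub_C_ne_zero a3)),
      natDegree_mul (pow_ne_zero _ (X_sub_C_ne_zero a1)) (pow_ne_zero _ (X_sub_C_ne_zero a2))]
      at hdegprod
    simp only [natDegree_pow, natDegree_X_sub_C, mul_one] at hdegprod
    omega
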